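/- Let R be a Prüfer domain and M a branched maximal ideal that is idempotent and the radical of a finitely generated ideal. Then M is not divisorial, but there exists a proper M-primary ideal of R that is divisorial. -/

import Mathlib

/-- An ideal is divisorial if `I = (R : (R : I))`, phrased via fractional ideals. -/
def IsDivisorial (R : Type*) [CommRing R] [IsDomain R] (I : Ideal R) : Prop :=
  (1 / (1 / (I : FractionalIdeal (nonZeroDivisors R) (FractionRing R))) :
    FractionalIdeal (nonZeroDivisors R) (FractionRing R))
    = (I : FractionalIdeal (nonZeroDivisors R) (FractionRing R))

/-- An ideal is invertible if it is a unit as a fractional ideal. -/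
def IsInvertibleIdeal (R : Type*) [CommRing R] [IsDomain R] (I : Ideal R) : Prop :=
  IsUnit (I : FractionalIdeal (nonZeroDivisors R) (FractionRing R))

/-- A Prüfer domain: every nonzero finitely generated ideal is invertible. -/
def IsPrufer (R : Type*) [CommRing R] [IsDomain R] : Prop :=
  ∀ I : Ideal R, I ≠ ⊥ → I.FG → IsInvertibleIdeal R I

/-- A prime `P` is sharp if it contains a finitely generated ideal contained
only in the maximal ideals that contain `P`. -/
def IsSharp (R : Type*) [CommRing R] (P : Ideal R) : Prop :=
  ∃ I : Ideal R, I.FG ∧ I ≤ P ∧ ∀ M : Ideal R, M.IsMaximal → I ≤ M → P ≤ M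

section Aux

variable {R : Type*} [CommRing R] [IsDomain R]

local notation "K" => FractionRing R
local notation "FI" => FractionalIdeal (nonZeroDivisors R) (FractionRing R)

/-- A unit fractional ideal times its quasi-inverse is one. -/
theorem aux_mul_one_div {I : FI} (hI : IsUnit I) : I * (1 / I) = 1 :=
  FractionalIdeal.mul_div_self_cancel_iff.2 ⟨↑hI.unit⁻¹, hI.mul_val_inv⟩

/-- An invertible ideal is divisorial. -/
theorem aux_divisorial_of_unit {I : Ideal R} (hI : IsInvertibleIdeal R I) :
    IsDivisorial R I := by
  have h1 : (I : FI) * (1 / (I : FI)) = 1 := aux_mul_one_div hI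
  exact (FractionalIdeal.eq_one_div_of_mul_eq_one_right _ _
    ((mul_comm _ _).trans h1)).symm

/-- An idempotent proper ideal is not invertible (as fractional ideal). -/
theorem aux_not_unit_of_idem {M : Ideal R} (hMne : M ≠ ⊤) (hid : M * M = M) :
    ¬ IsUnit (M : FI) := by
  intro hu
  have h2 : (M : FI) * (M : FI) = (M : FI) * 1 := by
    rw [mul_one, ← FractionalIdeal.coeIdeal_mul, hid]
  have := hu.mul_left_cancel h2
  rw [FractionalIdeal.coeIdeal_eq_one] at this
  exact hMne (this.trans Ideal.one_eq_top)

/-- Key lemma: for an idempotent maximal ideal of a Prüfer domain, `(R : M) = R`. -/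
theorem aux_one_div_eq_one (hR : IsPrufer R) {M : Ideal R} (hM : M.IsMaximal)
    (hM0 : M ≠ ⊥) (hid : M * M = M) : (1 : FI) / (M : FI) = 1 := by
  have hMne : M ≠ ⊤ := hM.ne_top
  have hMnu : ¬ IsUnit (M : FI) := aux_not_unit_of_idem hMne hid
  have hMfi0 : (M : FI) ≠ 0 := by
    simpa [FractionalIdeal.coeIdeal_eq_zero] using hM0
  apply le_antisymm
  · intro x hx
    by_contra hx1
    -- write x = a / s
    obtain ⟨⟨a, s⟩, rfl⟩ := IsLocalization.mk'_surjective (nonZeroDivisors R) x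
    dsimp only at hx hx1
    set x : K := IsLocalization.mk' K a s with hxdef
    have hxds : x = algebraMap R K a / algebraMap R K s := IsFractionRing.mk'_eq_div s
    have hs0 : (s : R) ≠ 0 := nonZeroDivisors.coe_ne_zero s
    have hsK0 : algebraMap R K (s : R) ≠ 0 := fun h =>
      hs0 (IsFractionRing.to_map_eq_zero_iff.mp h)
    -- the finitely generated ideal (a, s)
    set J : Ideal R := Ideal.span {a, (s : R)} with hJdef
    have hJ0 : J ≠ ⊥ := by
      intro h
      apply hs0
      have : (s : R) ∈ J := Ideal.subset_span (by simp)
      rw [h] at this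
      exact (Submodule.mem_bot R).mp this
    have hJfg : J.FG := by
      rw [hJdef]
      exact Submodule.fg_span ((Set.finite_singleton _).insert _)
    have hJu : IsUnit (J : FI) := hR J hJ0 hJfg
    -- the fractional ideal I = R + Rx
    set I : FI := 1 ⊔ FractionalIdeal.spanSingleton (nonZeroDivisors R) x with hIdef
    have hIeq : I = FractionalIdeal.spanSingleton (nonZeroDivisors R)
        ((algebraMap R K (s : R))⁻¹) * (J : FI) := by
      have hJc : (J : FI) =
          FractionalIdeal.spanSingleton (nonZeroDivisors R) (algebraMap R K a) ⊔
          FractionalIdeal.spanSingleton (nonZeroDivisors R) (algebraMap R K (s : R)) := by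
        rw [hJdef, Ideal.span_insert, FractionalIdeal.coeIdeal_sup,
          FractionalIdeal.coeIdeal_span_singleton, FractionalIdeal.coeIdeal_span_singleton]
        rfl
      rw [hJc, FractionalIdeal.sup_eq_add, mul_add,
        FractionalIdeal.spanSingleton_mul_spanSingleton,
        FractionalIdeal.spanSingleton_mul_spanSingleton,
        inv_mul_cancel₀ hsK0, FractionalIdeal.spanSingleton_one, hIdef,
        FractionalIdeal.sup_eq_add, add_comm]
      congr 1
      rw [hxds, div_eq_inv_mul]
    have hsu : IsUnit (FractionalIdeal.spanSingleton (nonZeroDivisors R)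
        ((algebraMap R K (s : R))⁻¹)) :=
      IsUnit.of_mul_eq_one
        (FractionalIdeal.spanSingleton (nonZeroDivisors R) (algebraMap R K (s : R)))
        (by rw [FractionalIdeal.spanSingleton_mul_spanSingleton, inv_mul_cancel₀ hsK0,
          FractionalIdeal.spanSingleton_one])
    have hIu : IsUnit I := by
      rw [hIeq]
      exact hsu.mul hJu
    have h1I : (1 : FI) ≤ I := le_sup_left
    have hI0 : I ≠ 0 := by
      intro h
      rw [h] at h1I
      exact one_ne_zero (le_antisymm h1I (FractionalIdeal.zero_le 1))
    have h2I : FractionalIdeal.spanSingleton (nonZeroDivisors R) x ≤ I := le_sup_right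
    have hxI : x ∈ I := h2I (FractionalIdeal.mem_spanSingleton_self _ x)
    -- M * I ≤ 1
    have hMI : (M : FI) * I ≤ 1 := by
      have hmul : (M : FI) * I =
          (M : FI) ⊔ (M : FI) * FractionalIdeal.spanSingleton (nonZeroDivisors R) x := by
        rw [hIdef, FractionalIdeal.sup_eq_add, mul_add, mul_one,
          FractionalIdeal.sup_eq_add]
      rw [hmul]
      refine sup_le FractionalIdeal.coeIdeal_le_one ?_
      rw [mul_comm]
      refine (FractionalIdeal.le_div_iff_mul_le hMfi0).1 ?_ |>.trans le_rfl
      exact (FractionalIdeal.spanSingleton_le_iff_mem).2 hx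
    have hMle : (M : FI) ≤ 1 / I := (FractionalIdeal.le_div_iff_mul_le hI0).2 hMI
    have hdivle : (1 : FI) / I ≤ 1 := by
      intro y hy
      have := (FractionalIdeal.mem_div_iff_of_ne_zero hI0).1 hy 1
        (h1I (FractionalIdeal.one_mem_one _))
      simpa [FractionalIdeal.mem_one_iff] using this
    obtain ⟨J₀, hJ₀⟩ := FractionalIdeal.le_one_iff_exists_coeIdeal.1 hdivle
    have hMJ₀ : M ≤ J₀ := by
      rw [← FractionalIdeal.coeIdeal_le_coeIdeal K]
      rw [hJ₀]
      exact hMle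
    rcases eq_or_lt_of_le hMJ₀ with h | h
    · -- 1 / I = M, so M would be invertible: contradiction
      apply hMnu
      have hmul : I * (M : FI) = 1 := by
        rw [← h] at hJ₀
        rw [hJ₀]
        exact aux_mul_one_div hIu
      exact IsUnit.of_mul_eq_one _ ((mul_comm _ _).trans hmul)
    · -- 1 / I = 1, so I = 1 and x ∈ 1: contradiction
      have hJtop : J₀ = ⊤ := hM.out.2 J₀ h
      have hI1 : I = 1 := by
        have h11 : (1 : FI) / I = 1 := by
          rw [← hJ₀, hJtop]
          simp [Ideal.one_eq_top]
        have := aux_mul_one_div hIu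
        rwa [h11, mul_one] at this
      exact hx1 (hI1 ▸ hxI)
  · rw [FractionalIdeal.le_div_iff_mul_le hMfi0, one_mul]
    exact FractionalIdeal.coeIdeal_le_one

end Aux

/-- A branched idempotent maximal ideal of a Prüfer domain that is the radical of a
finitely generated ideal is not divisorial, but has a divisorial proper primary ideal. -/
theorem maximal_branched_idempotent_sharp (R : Type*) [CommRing R] [IsDomain R]
    (hR : IsPrufer R) (M : Ideal R) (hM : M.IsMaximal)
    (hbr : ∃ Q : Ideal R, Q.IsPrimary ∧ Q.radical = M ∧ Q ≠ M)
    (hid : M * M = M)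
    (hrad : ∃ B : Ideal R, B.FG ∧ B.radical = M) :
    ¬ IsDivisorial R M ∧
      ∃ Q : Ideal R, Q.IsPrimary ∧ Q.radical = M ∧ Q < M ∧ IsDivisorial R Q := by
  obtain ⟨Q', hQ'p, hQ'r, hQ'ne⟩ := hbr
  obtain ⟨B, hBfg, hBrad⟩ := hrad
  have hM0 : M ≠ ⊥ := by
    intro h
    apply hQ'ne
    have : Q' ≤ M := hQ'r ▸ Ideal.le_radical
    rw [h] at this ⊢
    exact le_bot_iff.1 this
  have hkey : (1 : FractionalIdeal (nonZeroDivisors R) (FractionRing R)) / (M :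
      FractionalIdeal (nonZeroDivisors R) (FractionRing R)) = 1 :=
    aux_one_div_eq_one hR hM hM0 hid
  constructor
  · intro hdiv
    unfold IsDivisorial at hdiv
    rw [hkey, FractionalIdeal.div_one, eq_comm, FractionalIdeal.coeIdeal_eq_one] at hdiv
    exact hM.ne_top (hdiv.trans Ideal.one_eq_top)
  · have hB0 : B ≠ ⊥ := by
      intro h
      apply hM0
      rw [← hBrad, h, Ideal.radical_bot_of_noZeroDivisors]
    have hBu : IsInvertibleIdeal R B := hR B hB0 hBfg
    refine ⟨B, ?_, hBrad, ?_, aux_divisorial_of_unit hBu⟩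
    · exact Ideal.isPrimary_of_isMaximal_radical (hBrad ▸ hM)
    · refine lt_of_le_of_ne (hBrad ▸ Ideal.le_radical) ?_
      intro h
      exact aux_not_unit_of_idem hM.ne_top hid (h ▸ hBu)
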